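/- Under the same hypotheses, the second (elbow-up) solution θ₁ = φ + α − θ_base, θ₂ = −(π − β) also satisfies the same forward-kinematics equations; hence the planar 2R inverse kinematics admits two solutions whenever 0 < α < π. -/

import Mathlib

open Real

/-- Inverse kinematics of the planar 2R arm (elbow-up branch): the joint angles
`θ₁ = φ - α - θ_base`, `θ₂ = π - β` satisfy the forward-kinematics equations. -/
theorem planar2R_IK_elbow_up
    (l₁ l₂ x₁ z₁ xe ze θbase r φ α β θ₁ θ₂ : ℝ)
    (hl₁ : 0 < l₁) (hl₂ : 0 < l₂)
    (hr : r = Real.sqrt ((xe - x₁) ^ 2 + (ze - z₁) ^ 2))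
    (hrpos : 0 < r) (hrlo : |l₁ - l₂| ≤ r) (hrhi : r ≤ l₁ + l₂)
    (hφ : φ = Complex.arg ⟨xe - x₁, ze - z₁⟩)
    (hα : α = Real.arccos ((r ^ 2 + l₁ ^ 2 - l₂ ^ 2) / (2 * r * l₁)))
    (hβ : β = Real.arccos ((l₁ ^ 2 + l₂ ^ 2 - r ^ 2) / (2 * l₁ * l₂)))
    (hθ₁ : θ₁ = φ + α - θbase) (hθ₂ : θ₂ = -(π - β)) :
    xe = x₁ + l₁ * Real.cos (θbase + θ₁) + l₂ * Real.cos (θbase + θ₁ + θ₂) ∧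
    ze = z₁ + l₁ * Real.sin (θbase + θ₁) + l₂ * Real.sin (θbase + θ₁ + θ₂) := by
  obtain ⟨hab1, hab2⟩ := abs_le.mp hrlo
  set Ca : ℝ := (r ^ 2 + l₁ ^ 2 - l₂ ^ 2) / (2 * r * l₁) with hCa_def
  set Cb : ℝ := (l₁ ^ 2 + l₂ ^ 2 - r ^ 2) / (2 * l₁ * l₂) with hCb_def
  have hda : (0:ℝ) < 2 * r * l₁ := by positivity
  have hdb : (0:ℝ) < 2 * l₁ * l₂ := by positivity
  have hCa1 : Ca ≤ 1 := by rw [hCa_def, div_le_one hda]; nlinarith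
  have hCa2 : -1 ≤ Ca := by rw [hCa_def, le_div_iff₀ hda]; nlinarith
  have hCb1 : Cb ≤ 1 := by rw [hCb_def, div_le_one hdb]; nlinarith
  have hCb2 : -1 ≤ Cb := by rw [hCb_def, le_div_iff₀ hdb]; nlinarith
  have hcosα : Real.cos α = Ca := by rw [hα, Real.cos_arccos hCa2 hCa1]
  have hcosβ : Real.cos β = Cb := by rw [hβ, Real.cos_arccos hCb2 hCb1]
  have hsinα : Real.sin α = Real.sqrt (1 - Ca ^ 2) := by rw [hα, Real.sin_arccos]
  have hsinβ : Real.sin β = Real.sqrt (1 - Cb ^ 2) := by rw [hβ, Real.sin_arccos]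
  -- key identity: l₂ sin β = r sin α
  have hkey : l₂ * Real.sin β = r * Real.sin α := by
    rw [hsinα, hsinβ]
    rw [← Real.sqrt_sq hl₂.le, ← Real.sqrt_sq hrpos.le, ← Real.sqrt_mul (sq_nonneg _),
      ← Real.sqrt_mul (sq_nonneg _)]
    congr 1
    rw [hCa_def, hCb_def]
    field_simp
    ring
  have hkey2 : l₂ * Real.cos β = l₁ - r * Real.cos α := by
    rw [hcosα, hcosβ, hCa_def, hCb_def]
    field_simp
    ring
  have hpyth : Real.sin α ^ 2 + Real.cos α ^ 2 = 1 := Real.sin_sq_add_cos_sq α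
  -- cartesian coordinates
  set z : ℂ := ⟨xe - x₁, ze - z₁⟩ with hz
  have habs : ‖z‖ = r := by
    rw [hr, Complex.norm_def, Complex.normSq_mk]; congr 1; ring
  have hzne : z ≠ 0 := by
    intro h; rw [h] at habs; simp at habs; linarith
  have hx : xe - x₁ = r * Real.cos φ := by
    rw [hφ, Complex.cos_arg hzne, habs]
    field_simp
    rfl
  have hy : ze - z₁ = r * Real.sin φ := by
    rw [hφ, Complex.sin_arg, habs]
    field_simp
    rfl
  have ht1 : θbase + θ₁ = φ + α := by rw [hθ₁]; ring
  have ht2 : θbase + θ₁ + θ₂ = φ + α + β - π := by rw [hθ₁, hθ₂]; ring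
  rw [ht2, ht1]
  have hc2 : Real.cos (φ + α + β - π) = -Real.cos (φ + α + β) := by
    rw [Real.cos_sub_pi]
  have hs2 : Real.sin (φ + α + β - π) = -Real.sin (φ + α + β) := by
    rw [Real.sin_sub_pi]
  rw [hc2, hs2, Real.cos_add (φ + α), Real.sin_add (φ + α), Real.cos_add φ α,
    Real.sin_add φ α]
  constructor
  · linear_combination hx + (Real.cos φ * Real.cos α - Real.sin φ * Real.sin α) * hkey2 -
      (Real.sin φ * Real.cos α + Real.cos φ * Real.sin α) * hkey - r * Real.cos φ * hpyth
  · linear_combination hy + (Real.sin φ * Real.cos α + Real.cos φ * Real.sin α) * hkey2 +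
      (Real.cos φ * Real.cos α - Real.sin φ * Real.sin α) * hkey - r * Real.sin φ * hpyth
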